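/- For 0 < p < 1 and any n points z_1, ..., z_n on the unit circle, there exists z_0 of modulus 1 such that Σ_j 1/|z_0 - z_j|^p ≤ (3e)^p · (n/(1-p) - p/(1-p)). -/

import Mathlib

set_option maxHeartbeats 1000000

open Real Complex intervalIntegral MeasureTheory

lemma chord (θ : ℝ) : ‖Complex.exp (θ * Complex.I) - 1‖ = 2 * |Real.sin (θ/2)| := by
  have e1 : Complex.exp (↑(θ/2) * Complex.I) * Complex.exp (↑(θ/2) * Complex.I)
      = Complex.exp (↑θ * Complex.I) := by
    rw [← Complex.exp_add]; congr 1; push_cast; ring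
  have e2 : Complex.exp (↑(θ/2) * Complex.I) * Complex.exp (-↑(θ/2) * Complex.I) = 1 := by
    rw [← Complex.exp_add]
    norm_num
  have key : Complex.exp (↑θ * Complex.I) - 1
      = Complex.exp (↑(θ/2) * Complex.I) * (2 * Complex.I * Complex.sin (↑(θ/2))) := by
    rw [Complex.sin]
    linear_combination -e1 + e2 + (Complex.exp (↑(θ/2) * Complex.I)^2 -
      Complex.exp (↑(θ/2) * Complex.I) * Complex.exp (-↑(θ/2) * Complex.I)) * Complex.I_sq
  have a1 : ‖Complex.exp (↑(θ/2) * Complex.I)‖ = 1 := Complex.norm_exp_ofReal_mul_I _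
  have a2 : Complex.sin (↑(θ/2)) = ↑(Real.sin (θ/2)) := (Complex.ofReal_sin _).symm
  rw [key, norm_mul, a1, one_mul, norm_mul, norm_mul, a2, Complex.norm_real, Real.norm_eq_abs, Complex.norm_two,
    Complex.norm_I, mul_one]


noncomputable def HH (p θ : ℝ) : ℝ := 1 / ‖Complex.exp (θ * Complex.I) - 1‖ ^ p

lemma HH_meas (p : ℝ) (hp0 : 0 < p) : Measurable (HH p) := by
  unfold HH
  simp only [one_div]
  have hc : Continuous fun θ : ℝ => ‖Complex.exp (θ * Complex.I) - 1‖ := by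
    exact continuous_norm.comp ((Complex.continuous_exp.comp
      (Complex.continuous_ofReal.mul continuous_const)).sub continuous_const)
  exact ((hc.rpow_const fun x => Or.inr hp0.le).measurable).inv

lemma HH_nonneg (p θ : ℝ) : 0 ≤ HH p θ := by
  unfold HH
  positivity

-- pointwise bound on Icc 0 π
lemma HH_le (p : ℝ) (hp0 : 0 < p) {θ : ℝ} (h0 : 0 ≤ θ) (hπ : θ ≤ Real.pi) :
    HH p θ ≤ (Real.pi / 2) ^ p * θ ^ (-p) := by
  rcases eq_or_lt_of_le h0 with rfl | h0'
  · unfold HH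
    rw [chord]
    norm_num
    rw [Real.zero_rpow (by linarith : -p ≠ 0), Real.zero_rpow hp0.ne', mul_zero]
    simp
  · have hs : θ / Real.pi ≤ Real.sin (θ / 2) := by
      have := Real.mul_le_sin (x := θ / 2) (by linarith) (by linarith)
      calc θ / Real.pi = 2 / Real.pi * (θ / 2) := by field_simp
        _ ≤ Real.sin (θ / 2) := this
    have hsp : 0 < θ / Real.pi := div_pos h0' Real.pi_pos
    have habs : 2 * (θ / Real.pi) ≤ 2 * |Real.sin (θ / 2)| := by
      have : Real.sin (θ/2) ≤ |Real.sin (θ/2)| := le_abs_self _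
      linarith
    unfold HH
    rw [chord]
    have h1 : (2 * (θ / Real.pi)) ^ p ≤ (2 * |Real.sin (θ / 2)|) ^ p :=
      Real.rpow_le_rpow (by positivity) habs hp0.le
    have h2 : (0:ℝ) < (2 * (θ / Real.pi)) ^ p := Real.rpow_pos_of_pos (by positivity) _
    have h3 : 1 / (2 * |Real.sin (θ / 2)|) ^ p ≤ 1 / (2 * (θ / Real.pi)) ^ p :=
      one_div_le_one_div_of_le h2 h1
    refine h3.trans (le_of_eq ?_)
    rw [show 2 * (θ / Real.pi) = 2 / Real.pi * θ by ring,
      Real.mul_rpow (by positivity) h0, one_div, mul_inv,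
      ← Real.inv_rpow (by positivity), ← Real.rpow_neg h0]
    congr 2
    field_simp


noncomputable def GG (p θ : ℝ) : ℝ := (Real.pi / 2) ^ p * θ ^ (-p)

lemma GG_int (p : ℝ) (hp1 : p < 1) : IntervalIntegrable (GG p) volume 0 Real.pi := by
  unfold GG
  exact (intervalIntegral.intervalIntegrable_rpow' (by linarith)).const_mul _

lemma GG_integral (p : ℝ) (hp0 : 0 < p) (hp1 : p < 1) :
    ∫ θ in (0:ℝ)..Real.pi, GG p θ = Real.pi * (2:ℝ) ^ (-p) / (1 - p) := by
  unfold GG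
  rw [intervalIntegral.integral_const_mul, integral_rpow (Or.inl (by linarith))]
  rw [Real.zero_rpow (by linarith : -p + 1 ≠ 0)]
  rw [Real.div_rpow Real.pi_pos.le (by norm_num), Real.rpow_neg (by norm_num : (0:ℝ) ≤ 2),
    sub_zero]
  rw [show -p + 1 = 1 - p by ring]
  have h2p : (0:ℝ) < 2 ^ p := Real.rpow_pos_of_pos (by norm_num) p
  have h1p : (0:ℝ) < 1 - p := by linarith
  rw [div_mul_div_comm, ← Real.rpow_add Real.pi_pos, show p + (1-p) = 1 by ring, Real.rpow_one]
  field_simp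

lemma HH_int_0pi (p : ℝ) (hp0 : 0 < p) (hp1 : p < 1) :
    IntervalIntegrable (HH p) volume 0 Real.pi := by
  apply (GG_int p hp1).mono_fun ((HH_meas p hp0).aestronglyMeasurable)
  rw [Set.uIoc_of_le Real.pi_pos.le]
  refine (MeasureTheory.ae_restrict_iff' measurableSet_Ioc).2 (Filter.Eventually.of_forall ?_)
  intro x hx
  simp only [Real.norm_eq_abs]
  rw [_root_.abs_of_nonneg (HH_nonneg p x)]
  refine (HH_le p hp0 hx.1.le hx.2).trans (le_abs_self _)

lemma HH_integral_0pi (p : ℝ) (hp0 : 0 < p) (hp1 : p < 1) :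
    ∫ θ in (0:ℝ)..Real.pi, HH p θ ≤ Real.pi * (2:ℝ) ^ (-p) / (1 - p) := by
  rw [← GG_integral p hp0 hp1]
  apply intervalIntegral.integral_mono_on Real.pi_pos.le (HH_int_0pi p hp0 hp1) (GG_int p hp1)
  intro x hx
  exact HH_le p hp0 hx.1 hx.2

lemma HH_per (p : ℝ) : Function.Periodic (HH p) (2 * Real.pi) := by
  intro x
  unfold HH
  rw [chord, chord]
  have : (x + 2 * Real.pi) / 2 = x / 2 + Real.pi := by ring
  rw [this, Real.sin_add_pi, abs_neg]

lemma HH_symm (p : ℝ) (x : ℝ) : HH p (2 * Real.pi - x) = HH p x := by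
  unfold HH
  rw [chord, chord]
  have : (2 * Real.pi - x) / 2 = Real.pi - x / 2 := by ring
  rw [this, Real.sin_pi_sub]

lemma HH_int_pi2pi (p : ℝ) (hp0 : 0 < p) (hp1 : p < 1) :
    IntervalIntegrable (HH p) volume Real.pi (2 * Real.pi) := by
  have h := (HH_int_0pi p hp0 hp1).comp_sub_left (2 * Real.pi)
  have : (fun x => HH p (2 * Real.pi - x)) = HH p := funext fun x => HH_symm p x
  rw [this] at h
  have e1 : 2 * Real.pi - Real.pi = Real.pi := by ring
  have e2 : 2 * Real.pi - 0 = 2 * Real.pi := by ring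
  rw [e1, e2] at h
  exact h.symm

lemma HH_int_02pi (p : ℝ) (hp0 : 0 < p) (hp1 : p < 1) :
    IntervalIntegrable (HH p) volume 0 (2 * Real.pi) :=
  (HH_int_0pi p hp0 hp1).trans (HH_int_pi2pi p hp0 hp1)

lemma HH_integral_02pi (p : ℝ) (hp0 : 0 < p) (hp1 : p < 1) :
    ∫ θ in (0:ℝ)..(2 * Real.pi), HH p θ ≤ 2 * Real.pi * (2:ℝ) ^ (-p) / (1 - p) := by
  rw [← intervalIntegral.integral_add_adjacent_intervals (HH_int_0pi p hp0 hp1)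
    (HH_int_pi2pi p hp0 hp1)]
  have h2 : ∫ θ in Real.pi..(2 * Real.pi), HH p θ = ∫ θ in (0:ℝ)..Real.pi, HH p θ := by
    have h := intervalIntegral.integral_comp_sub_left (a := (0:ℝ)) (b := Real.pi) (HH p)
      (2 * Real.pi)
    simp only [HH_symm] at h
    rw [show 2 * Real.pi - Real.pi = Real.pi by ring,
      show 2 * Real.pi - 0 = 2 * Real.pi by ring] at h
    exact h.symm
  rw [h2]
  have := HH_integral_0pi p hp0 hp1
  have hrw : 2 * Real.pi * (2:ℝ) ^ (-p) / (1 - p)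
      = Real.pi * (2:ℝ) ^ (-p) / (1 - p) + Real.pi * (2:ℝ) ^ (-p) / (1 - p) := by ring
  rw [hrw]
  linarith

-- integrability on any subinterval of [-2π, 4π]
lemma HH_int_big (p : ℝ) (hp0 : 0 < p) (hp1 : p < 1) :
    IntervalIntegrable (HH p) volume (-(2 * Real.pi)) (4 * Real.pi) := by
  have base := HH_int_02pi p hp0 hp1
  have left : IntervalIntegrable (HH p) volume (-(2 * Real.pi)) 0 := by
    have h := base.comp_sub_right (-(2 * Real.pi))
    have he : (fun x => HH p (x - -(2 * Real.pi))) = HH p := by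
      funext x
      rw [sub_neg_eq_add, HH_per p x]
    rw [he] at h
    rw [show (0:ℝ) + -(2 * Real.pi) = -(2 * Real.pi) by ring,
      show 2 * Real.pi + -(2 * Real.pi) = 0 by ring] at h
    exact h
  have right : IntervalIntegrable (HH p) volume (2 * Real.pi) (4 * Real.pi) := by
    have h := base.comp_sub_right (2 * Real.pi)
    have he : (fun x => HH p (x - 2 * Real.pi)) = HH p := by
      funext x
      rw [(HH_per p).sub_eq x]
    rw [he] at h
    rw [show (0:ℝ) + 2 * Real.pi = 2 * Real.pi by ring,
      show 2 * Real.pi + 2 * Real.pi = 4 * Real.pi by ring] at h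
    exact h
  exact (left.trans base).trans right

lemma point_transform (p : ℝ) {w : ℂ} (hw : ‖w‖ = 1) (θ : ℝ) :
    1 / ‖Complex.exp (θ * Complex.I) - w‖ ^ p = HH p (θ - w.arg) := by
  unfold HH
  have hw' : w = Complex.exp (w.arg * Complex.I) := by
    conv_lhs => rw [← Complex.norm_mul_exp_arg_mul_I w]
    rw [hw, Complex.ofReal_one, one_mul]
  have key : Complex.exp (θ * Complex.I) - w
      = Complex.exp (w.arg * Complex.I) * (Complex.exp ((θ - w.arg : ℝ) * Complex.I) - 1) := by
    have e : Complex.exp (↑w.arg * Complex.I) * Complex.exp ((↑(θ - w.arg)) * Complex.I)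
        = Complex.exp (↑θ * Complex.I) := by
      rw [← Complex.exp_add]; congr 1; push_cast; ring
    rw [mul_sub, mul_one, e, ← hw']
  rw [key, norm_mul, Complex.norm_exp_ofReal_mul_I, one_mul]

lemma point_int (p : ℝ) (hp0 : 0 < p) (hp1 : p < 1) {w : ℂ} (hw : ‖w‖ = 1) :
    IntervalIntegrable (fun θ => HH p (θ - w.arg)) volume 0 (2 * Real.pi) := by
  have hφ1 := Complex.neg_pi_lt_arg w
  have hφ2 := Complex.arg_le_pi w
  have hπ := Real.pi_pos
  have hsub : Set.uIcc (-w.arg) (2 * Real.pi - w.arg)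
      ⊆ Set.uIcc (-(2 * Real.pi)) (4 * Real.pi) := by
    rw [Set.uIcc_of_le (by linarith), Set.uIcc_of_le (by linarith)]
    apply Set.Icc_subset_Icc <;> linarith
  have h := ((HH_int_big p hp0 hp1).mono_set hsub).comp_sub_right w.arg
  rw [show -w.arg + w.arg = 0 by ring, show 2 * Real.pi - w.arg + w.arg = 2 * Real.pi by ring] at h
  exact h

lemma point_integral (p : ℝ) (w : ℂ) :
    ∫ θ in (0:ℝ)..(2 * Real.pi), HH p (θ - w.arg) = ∫ θ in (0:ℝ)..(2 * Real.pi), HH p θ := by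
  rw [intervalIntegral.integral_comp_sub_right (HH p) w.arg]
  have h := (HH_per p).intervalIntegral_add_eq (0 - w.arg) 0
  rw [show 0 - w.arg + 2 * Real.pi = 2 * Real.pi - w.arg by ring, zero_add] at h
  exact h

lemma arith_key (n : ℕ) (hn2 : 2 ≤ n) (p : ℝ) (hp0 : 0 < p) (hp1 : p < 1) :
    (n:ℝ) < (2:ℝ) ^ p * (3 * Real.exp 1) ^ p * (n - p) := by
  have hAB : (2:ℝ) ^ p * (3 * Real.exp 1) ^ p = (6 * Real.exp 1) ^ p := by
    rw [← Real.mul_rpow (by norm_num) (by positivity)]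
    congr 1
    ring
  rw [hAB]
  have hlog : 2 ≤ Real.log (6 * Real.exp 1) := by
    rw [Real.log_mul (by norm_num) (Real.exp_ne_zero 1), Real.log_exp]
    have h6 : (1:ℝ) ≤ Real.log 6 := by
      rw [Real.le_log_iff_exp_le (by norm_num)]
      exact Real.exp_one_lt_d9.le.trans (by norm_num)
    linarith
  have hstep : 1 + 2 * p ≤ (6 * Real.exp 1) ^ p := by
    rw [Real.rpow_def_of_pos (by positivity)]
    calc 1 + 2 * p ≤ Real.exp (2 * p) := by
          have := Real.add_one_le_exp (2 * p); linarith
      _ ≤ Real.exp (Real.log (6 * Real.exp 1) * p) :=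
          Real.exp_le_exp.2 (by nlinarith)
  have hn : (2:ℝ) ≤ (n:ℝ) := by exact_mod_cast hn2
  nlinarith [hstep, hn, hp0, hp1]

/-- For 0 < p < 1 and n points on the unit circle, there exists z₀ of modulus 1 with
∑ⱼ 1/|z₀ - zⱼ|ᵖ ≤ (3e)ᵖ·(n/(1-p) - p/(1-p)). -/
theorem chebyshev_Lp_upper_bound_p_lt_one (n : ℕ) (hn : 0 < n) (p : ℝ)
    (hp0 : 0 < p) (hp1 : p < 1)
    (z : Fin n → ℂ) (hz : ∀ j, ‖z j‖ = 1) :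
    ∃ z₀ : ℂ, ‖z₀‖ = 1 ∧
      ∑ j, 1 / ‖z₀ - z j‖ ^ p
        ≤ (3 * Real.exp 1) ^ p * ((n : ℝ) / (1 - p) - p / (1 - p)) := by
  have h1p : (0:ℝ) < 1 - p := by linarith
  rcases Nat.lt_or_ge n 2 with hn1 | hn2
  · -- n = 1
    have : n = 1 := by omega
    subst this
    refine ⟨-z 0, (norm_neg _).trans (hz 0), ?_⟩
    have habs : ‖-z 0 - z 0‖ = 2 := by
      rw [show -z 0 - z 0 = -(2 * z 0) by ring, norm_neg, norm_mul, Complex.norm_two,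
        hz 0, mul_one]
    rw [Fin.sum_univ_one, habs]
    have hfac : ((1:ℕ):ℝ) / (1 - p) - p / (1 - p) = 1 := by
      rw [Nat.cast_one, div_sub_div_same, div_self h1p.ne']
    rw [hfac, mul_one]
    have h2p : (1:ℝ) ≤ 2 ^ p := Real.one_le_rpow (by norm_num) hp0.le
    have h3e : (1:ℝ) ≤ (3 * Real.exp 1) ^ p :=
      Real.one_le_rpow (by nlinarith [Real.exp_pos 1, Real.add_one_le_exp 1]) hp0.le
    calc 1 / (2:ℝ) ^ p ≤ 1 := by
          rw [div_le_one (by positivity)]; exact h2p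
      _ ≤ (3 * Real.exp 1) ^ p := h3e
  · -- n ≥ 2
    by_contra hcon
    push_neg at hcon
    have hπ := Real.pi_pos
    set C : ℝ := (3 * Real.exp 1) ^ p * ((n : ℝ) / (1 - p) - p / (1 - p)) with hC
    -- pointwise lower bound
    have hpt : ∀ θ : ℝ, C < ∑ j, HH p (θ - (z j).arg) := by
      intro θ
      have h := hcon (Complex.exp (θ * Complex.I)) (Complex.norm_exp_ofReal_mul_I θ)
      calc C < ∑ j, 1 / ‖Complex.exp (θ * Complex.I) - z j‖ ^ p := h
        _ = ∑ j, HH p (θ - (z j).arg) := by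
            exact Finset.sum_congr rfl fun j _ => point_transform p (hz j) θ
    -- integrability of the sum
    have hint : IntervalIntegrable (fun θ => ∑ j, HH p (θ - (z j).arg)) volume 0 (2 * Real.pi) := by
      have h := IntervalIntegrable.sum (μ := volume) (a := 0) (b := 2 * Real.pi)
        (f := fun (j : Fin n) (θ : ℝ) => HH p (θ - (z j).arg)) Finset.univ
        (fun j _ => point_int p hp0 hp1 (hz j))
      have e : (fun θ : ℝ => ∑ j : Fin n, HH p (θ - (z j).arg))
          = ∑ j : Fin n, fun θ : ℝ => HH p (θ - (z j).arg) := by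
        funext θ; simp [Finset.sum_apply]
      rw [e]
      exact h
    -- integral upper bound
    have hup : ∫ θ in (0:ℝ)..(2 * Real.pi), (∑ j, HH p (θ - (z j).arg))
        ≤ (n:ℝ) * (2 * Real.pi * (2:ℝ) ^ (-p) / (1 - p)) := by
      rw [intervalIntegral.integral_finset_sum
        (f := fun (j : Fin n) (θ : ℝ) => HH p (θ - (z j).arg))
        (fun j _ => point_int p hp0 hp1 (hz j))]
      calc ∑ j : Fin n, ∫ θ in (0:ℝ)..(2 * Real.pi), HH p (θ - (z j).arg)
          = ∑ j : Fin n, ∫ θ in (0:ℝ)..(2 * Real.pi), HH p θ := by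
            exact Finset.sum_congr rfl fun j _ => point_integral p (z j)
        _ = (n:ℝ) * ∫ θ in (0:ℝ)..(2 * Real.pi), HH p θ := by
            rw [Finset.sum_const, Finset.card_univ, Fintype.card_fin, nsmul_eq_mul]
        _ ≤ (n:ℝ) * (2 * Real.pi * (2:ℝ) ^ (-p) / (1 - p)) := by
            apply mul_le_mul_of_nonneg_left (HH_integral_02pi p hp0 hp1) (by positivity)
    -- integral lower bound
    have hlow : 2 * Real.pi * C ≤ ∫ θ in (0:ℝ)..(2 * Real.pi), (∑ j, HH p (θ - (z j).arg)) := by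
      have hconst : IntervalIntegrable (fun _ : ℝ => C) volume 0 (2 * Real.pi) :=
        intervalIntegrable_const
      have := intervalIntegral.integral_mono_on (by linarith : (0:ℝ) ≤ 2 * Real.pi)
        hconst hint (fun x _ => (hpt x).le)
      rwa [intervalIntegral.integral_const, sub_zero, smul_eq_mul] at this
    -- strict arithmetic comparison
    have hfac : ((n:ℝ) / (1 - p) - p / (1 - p)) = ((n:ℝ) - p) / (1 - p) := by rw [div_sub_div_same]
    have hkey := arith_key n hn2 p hp0 hp1
    have h2p : (0:ℝ) < 2 ^ p := Real.rpow_pos_of_pos (by norm_num) p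
    have hstrict : (n:ℝ) * (2 * Real.pi * (2:ℝ) ^ (-p) / (1 - p)) < 2 * Real.pi * C := by
      rw [hC, hfac, Real.rpow_neg (by norm_num : (0:ℝ) ≤ 2)]
      rw [show (n:ℝ) * (2 * Real.pi * ((2:ℝ) ^ p)⁻¹ / (1 - p))
          = (2 * Real.pi / (1 - p)) * ((n:ℝ) / (2:ℝ) ^ p) by field_simp]
      rw [show 2 * Real.pi * ((3 * Real.exp 1) ^ p * (((n:ℝ) - p) / (1 - p)))
          = (2 * Real.pi / (1 - p)) * ((3 * Real.exp 1) ^ p * ((n:ℝ) - p)) by field_simp]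
      apply mul_lt_mul_of_pos_left _ (by positivity)
      rw [div_lt_iff₀ h2p]
      nlinarith [hkey]
    linarith
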